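/- arXiv:1402.0186 — 5 statements merged into one kernel-verified Lean document; each statement's English description precedes it below -/
import Mathlib

section
/- Let H be a topological group, Y a locally convex space, h : H → Y continuous, and X : ℝ → H a continuous one-parameter subgroup such that the derivative (D_X h)(g) := lim_{t→0} (h(g·X(t)) − h(g))/t exists for all g ∈ H and defines a continuous function D_X h : H → Y. Then there is a continuous function χ : ℝ × H → Y with χ(0,g) = 0 and h(g·X(t)) = h(g) + t·(D_X h)(g) + t·χ(t,g) for all t ∈ ℝ, g ∈ H. -/
set_option linter.unusedSectionVars false

open Filter Topology Set

section OneParamDefs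

variable (G : Type*) [Group G] [TopologicalSpace G] [IsTopologicalGroup G]

/-- The set of continuous one-parameter subgroups of `G`, as a subset of `C(ℝ, G)`
(the latter carrying the compact-open topology, i.e. the topology of uniform
convergence on compact subsets of `ℝ`). -/
def OneParam : Set C(ℝ, G) := {γ | ∀ t s : ℝ, γ (t + s) = γ t * γ s}

variable {G}

/-- The trivial one-parameter subgroup. -/
def oneOP : ↥(OneParam G) := ⟨⟨fun _ => 1, continuous_const⟩, fun _ _ => by simp⟩

/-- The adjoint action of `G` on its one-parameter subgroups. -/
def adOP (g : G) (γ : ↥(OneParam G)) : ↥(OneParam G) :=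
  ⟨⟨fun t => g * γ.1 t * g⁻¹, by fun_prop⟩, fun t s => by
    simp only [ContinuousMap.coe_mk, γ.2 t s]; group⟩

/-- Pairing of one-parameter subgroups of `H` and `G` into a one-parameter
subgroup of `H × G`. -/
def prodOP {H : Type*} [Group H] [TopologicalSpace H] [IsTopologicalGroup H]
    (β : ↥(OneParam H)) (γ : ↥(OneParam G)) : ↥(OneParam (H × G)) :=
  ⟨⟨fun t => (β.1 t, γ.1 t), by fun_prop⟩, fun t s => by
    simp only [ContinuousMap.coe_mk, β.2 t s, γ.2 t s]; rfl⟩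

end OneParamDefs

section Smoothness

variable {G : Type*} [Group G] [TopologicalSpace G] [IsTopologicalGroup G]
variable {Y : Type*} [AddCommGroup Y] [Module ℝ Y] [TopologicalSpace Y]

/-- `φ` has derivative `v` at `g` along the one-parameter subgroup `γ`. -/
def HasLieDeriv (φ : G → Y) (γ : ↥(OneParam G)) (g : G) (v : Y) : Prop :=
  Tendsto (fun t : ℝ => t⁻¹ • (φ (g * γ.1 t) - φ g)) (𝓝[≠] (0 : ℝ)) (𝓝 v)

/-- `F` is a coherent family of iterated derivatives of `φ` up to order `n`:
`F k g (γ₁, …, γ_k) = (D^λ_{γ_k} ⋯ D^λ_{γ₁} φ)(g)`, each of them jointly continuous. -/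
def CnSeq (n : ℕ) (φ : G → Y) (F : ∀ k : ℕ, G → (Fin k → ↥(OneParam G)) → Y) : Prop :=
  (∀ g γ, F 0 g γ = φ g) ∧
  (∀ k, k < n → ∀ (g : G) (γ : Fin (k + 1) → ↥(OneParam G)),
      HasLieDeriv (fun h => F k h fun i => γ i.castSucc) (γ (Fin.last k)) g (F (k + 1) g γ)) ∧
  (∀ k, k ≤ n → Continuous fun p : G × (Fin k → ↥(OneParam G)) => F k p.1 p.2)

/-- `F` is a coherent family of iterated derivatives of `φ` of all orders. -/
def SmoothSeq (φ : G → Y) (F : ∀ k : ℕ, G → (Fin k → ↥(OneParam G)) → Y) : Prop :=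
  ∀ n, CnSeq n φ F

/-- `φ ∈ C^∞(G, Y)`: all iterated derivatives along continuous one-parameter subgroups
exist and are jointly continuous. -/
def IsCInf (φ : G → Y) : Prop := ∃ F, SmoothSeq φ F

theorem HasLieDeriv.add' [ContinuousAdd Y] {φ ψ : G → Y} {γ : ↥(OneParam G)} {g : G} {v w : Y}
    (h1 : HasLieDeriv φ γ g v) (h2 : HasLieDeriv ψ γ g w) :
    HasLieDeriv (fun x => φ x + ψ x) γ g (v + w) := by
  refine (h1.add h2).congr fun t => ?_
  simp only [smul_sub, smul_add]
  abel

theorem HasLieDeriv.const_smul' {𝕜 : Type*} [Monoid 𝕜] [DistribMulAction 𝕜 Y]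
    [SMulCommClass ℝ 𝕜 Y] [ContinuousConstSMul 𝕜 Y]
    {φ : G → Y} {γ : ↥(OneParam G)} {g : G} {v : Y} (c : 𝕜) (h : HasLieDeriv φ γ g v) :
    HasLieDeriv (fun x => c • φ x) γ g (c • v) := by
  haveI := SMulCommClass.symm ℝ 𝕜 Y
  refine (h.const_smul c).congr fun t => ?_
  show c • (t⁻¹ • (φ (g * γ.1 t) - φ g)) = t⁻¹ • (c • φ (g * γ.1 t) - c • φ g)
  rw [← smul_sub, smul_comm]

theorem SmoothSeq.addSeq [ContinuousAdd Y] {φ ψ : G → Y} {F F'}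
    (hF : SmoothSeq φ F) (hF' : SmoothSeq ψ F') :
    SmoothSeq (φ + ψ) (fun k g γ => F k g γ + F' k g γ) := by
  intro n
  refine ⟨fun g γ => by
    show F 0 g γ + F' 0 g γ = (φ + ψ) g
    rw [(hF n).1 g γ, (hF' n).1 g γ]; rfl, fun k hk g γ => ?_,
    fun k hk => ((hF n).2.2 k hk).add ((hF' n).2.2 k hk)⟩
  exact ((hF n).2.1 k hk g γ).add' ((hF' n).2.1 k hk g γ)

theorem SmoothSeq.smulSeq {𝕜 : Type*} [Monoid 𝕜] [DistribMulAction 𝕜 Y]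
    [SMulCommClass ℝ 𝕜 Y] [ContinuousConstSMul 𝕜 Y] {φ : G → Y} {F}
    (c : 𝕜) (hF : SmoothSeq φ F) :
    SmoothSeq (c • φ) (fun k g γ => c • F k g γ) := by
  intro n
  refine ⟨fun g γ => by
    show c • F 0 g γ = (c • φ) g
    rw [(hF n).1 g γ]; rfl, fun k hk g γ => ?_,
    fun k hk => ((hF n).2.2 k hk).const_smul c⟩
  exact ((hF n).2.1 k hk g γ).const_smul' c

theorem SmoothSeq.zeroSeq : SmoothSeq (0 : G → Y) (fun _ _ _ => 0) := by
  intro n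
  refine ⟨fun _ _ => rfl, fun k hk g γ => ?_, fun k hk => continuous_const⟩
  have : (fun t : ℝ => t⁻¹ • ((0 : Y) - 0)) = fun _ => (0 : Y) := by
    funext t; simp
  simpa [HasLieDeriv, this] using tendsto_const_nhds

theorem SmoothSeq.unique [T2Space Y] {φ : G → Y} {F F'}
    (hF : SmoothSeq φ F) (hF' : SmoothSeq φ F') : F = F' := by
  have key : ∀ k, F k = F' k := by
    intro k
    induction k with
    | zero => funext g γ; rw [(hF 0).1 g γ, (hF' 0).1 g γ]
    | succ k ih =>
      funext g γ
      have h1 := (hF (k + 1)).2.1 k (Nat.lt_succ_self k) g γ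
      have h2 := (hF' (k + 1)).2.1 k (Nat.lt_succ_self k) g γ
      rw [ih] at h1
      exact tendsto_nhds_unique h1 h2
  funext k; exact key k

end Smoothness

section Carrier

variable (𝕜 : Type*) [Ring 𝕜]
variable (G : Type*) [Group G] [TopologicalSpace G] [IsTopologicalGroup G]
variable (Y : Type*) [AddCommGroup Y] [Module ℝ Y] [TopologicalSpace Y] [ContinuousAdd Y]
  [Module 𝕜 Y] [SMulCommClass ℝ 𝕜 Y] [ContinuousConstSMul 𝕜 Y]

/-- The space `E(G, Y) = C^∞(G, Y)` of smooth `Y`-valued functions on `G`,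
as a submodule of `G → Y`. -/
def SmoothCarrier : Submodule 𝕜 (G → Y) where
  carrier := {φ | IsCInf φ}
  add_mem' := by
    rintro φ ψ ⟨F, hF⟩ ⟨F', hF'⟩
    exact ⟨_, hF.addSeq hF'⟩
  zero_mem' := ⟨_, SmoothSeq.zeroSeq⟩
  smul_mem' := by
    rintro c φ ⟨F, hF⟩
    exact ⟨_, hF.smulSeq c⟩

variable {𝕜 G Y}

theorem mem_smoothCarrier {φ : G → Y} : φ ∈ SmoothCarrier 𝕜 G Y ↔ IsCInf φ := Iff.rfl

end Carrier
section Topology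

variable (𝕜 : Type*) [Ring 𝕜]
variable (G : Type*) [Group G] [TopologicalSpace G] [IsTopologicalGroup G]
variable (Y : Type*) [AddCommGroup Y] [Module ℝ Y] [UniformSpace Y] [ContinuousAdd Y]
  [Module 𝕜 Y] [SMulCommClass ℝ 𝕜 Y] [ContinuousConstSMul 𝕜 Y]

variable {G Y}

/-- The (canonical choice of the) family of iterated derivatives of a function `φ`,
nonzero only when `φ` is smooth. -/
noncomputable def itD (φ : G → Y) : ∀ k : ℕ, G → (Fin k → ↥(OneParam G)) → Y :=
  @dite _ (IsCInf φ) (Classical.dec _) (fun h => h.choose) (fun _ => fun _ _ _ => 0)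

theorem itD_smoothSeq {φ : G → Y} (h : IsCInf φ) : SmoothSeq φ (itD φ) := by
  unfold itD
  rw [dif_pos h]
  exact h.choose_spec

theorem itD_spec [T2Space Y] {φ : G → Y} {F} (h : SmoothSeq φ F) : itD φ = F :=
  SmoothSeq.unique (itD_smoothSeq ⟨F, h⟩) h

variable (G Y) in
/-- The uniform structure of the topology on `E(G, Y) = C^∞(G, Y)` determined by
the seminorms `p_{K₁,K₂}`: uniform convergence of all iterated derivatives on
compact subsets of `G × L(G)^k`, `k ∈ ℕ`. -/
noncomputable def smoothUniform : UniformSpace ↥(SmoothCarrier 𝕜 G Y) :=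
  UniformSpace.comap
    (fun f : ↥(SmoothCarrier 𝕜 G Y) => fun k : ℕ =>
      UniformOnFun.ofFun {S : Set (G × (Fin k → ↥(OneParam G))) | IsCompact S}
        fun p => itD (f : G → Y) k p.1 p.2)
    inferInstance

variable (G Y) in
/-- The topology on `E(G, Y) = C^∞(G, Y)` of uniform convergence of all iterated
derivatives on compact subsets of `G × L(G)^k`. -/
noncomputable abbrev smoothTop : TopologicalSpace ↥(SmoothCarrier 𝕜 G Y) :=
  (smoothUniform 𝕜 G Y).toTopologicalSpace

end Topology
section Instances

variable {𝕜 : Type*} [Ring 𝕜]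
variable {G : Type*} [Group G] [TopologicalSpace G] [IsTopologicalGroup G]
variable {Y : Type*} [AddCommGroup Y] [Module ℝ Y] [UniformSpace Y] [ContinuousAdd Y]
  [Module 𝕜 Y] [SMulCommClass ℝ 𝕜 Y] [ContinuousConstSMul 𝕜 Y]

theorem itD_add [T2Space Y] (f g : ↥(SmoothCarrier 𝕜 G Y)) :
    itD ((f + g : ↥(SmoothCarrier 𝕜 G Y)) : G → Y)
      = fun k x γ => itD (f : G → Y) k x γ + itD (g : G → Y) k x γ :=
  itD_spec ((itD_smoothSeq f.2).addSeq (itD_smoothSeq g.2))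

theorem itD_smul [T2Space Y] (c : 𝕜) (f : ↥(SmoothCarrier 𝕜 G Y)) :
    itD ((c • f : ↥(SmoothCarrier 𝕜 G Y)) : G → Y)
      = fun k x γ => c • itD (f : G → Y) k x γ :=
  itD_spec ((itD_smoothSeq f.2).smulSeq c)

theorem smooth_continuousAdd [T2Space Y] [IsUniformAddGroup Y] :
    @ContinuousAdd ↥(SmoothCarrier 𝕜 G Y) (smoothTop 𝕜 G Y) _ := by
  letI τ : TopologicalSpace ↥(SmoothCarrier 𝕜 G Y) := smoothTop 𝕜 G Y
  set Φ := fun f : ↥(SmoothCarrier 𝕜 G Y) => fun k : ℕ =>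
      UniformOnFun.ofFun {S : Set (G × (Fin k → ↥(OneParam G))) | IsCompact S}
        (fun p => itD (f : G → Y) k p.1 p.2) with hΦdef
  have hind : IsInducing Φ := ⟨rfl⟩
  constructor
  rw [hind.continuous_iff]
  have heq : (Φ ∘ fun p : ↥(SmoothCarrier 𝕜 G Y) × ↥(SmoothCarrier 𝕜 G Y) => p.1 + p.2)
      = fun p => Φ p.1 + Φ p.2 := by
    funext p
    simp only [Function.comp_apply, hΦdef, itD_add p.1 p.2]
    rfl
  rw [heq]
  exact (hind.continuous.comp continuous_fst).add (hind.continuous.comp continuous_snd)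

theorem smooth_continuousConstSMul [T2Space Y] [IsUniformAddGroup Y] :
    @ContinuousConstSMul 𝕜 ↥(SmoothCarrier 𝕜 G Y) (smoothTop 𝕜 G Y) _ := by
  letI τ : TopologicalSpace ↥(SmoothCarrier 𝕜 G Y) := smoothTop 𝕜 G Y
  haveI : UniformContinuousConstSMul 𝕜 Y :=
    uniformContinuousConstSMul_of_continuousConstSMul 𝕜 Y
  set Φ := fun f : ↥(SmoothCarrier 𝕜 G Y) => fun k : ℕ =>
      UniformOnFun.ofFun {S : Set (G × (Fin k → ↥(OneParam G))) | IsCompact S}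
        (fun p => itD (f : G → Y) k p.1 p.2) with hΦdef
  have hind : IsInducing Φ := ⟨rfl⟩
  refine ⟨fun c => ?_⟩
  rw [hind.continuous_iff]
  have heq : (Φ ∘ fun f : ↥(SmoothCarrier 𝕜 G Y) => c • f)
      = fun f => fun k : ℕ =>
        (UniformOnFun.ofFun _ ∘ (((c • ·) : Y → Y) ∘ ·) ∘ UniformOnFun.toFun _) (Φ f k) := by
    funext f
    simp only [Function.comp_apply, hΦdef, itD_smul c f]
    rfl
  rw [heq]
  refine continuous_pi fun k => ?_
  exact ((UniformOnFun.postcomp_uniformContinuous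
    (uniformContinuous_const_smul c)).continuous).comp
      ((continuous_apply k).comp hind.continuous)

end Instances
section ComplexValued

variable (G : Type*) [Group G] [TopologicalSpace G] [IsTopologicalGroup G]

/-- `E(G) = C^∞(G) = C^∞(G, ℂ)`, as a `ℂ`-submodule of `G → ℂ`. -/
noncomputable abbrev EC := ↥(SmoothCarrier ℂ G ℂ)

variable {G}

/-- The convolution `f ∗ u` of a function `f` with a (compactly supported) distribution `u`:
`(f ∗ u)(x) = ǔ(f ∘ L_x)`, where `ǔ(φ) = u(φ̌)` and `φ̌(y) = φ(y⁻¹)`.  (Junk value `0`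
at points where `y ↦ f(x y⁻¹)` fails to be smooth.) -/
noncomputable def convFn (u : EC G → ℂ) (f : G → ℂ) : G → ℂ := fun x =>
  @dite _ (IsCInf fun y => f (x * y⁻¹)) (Classical.dec _)
    (fun h => u ⟨fun y => f (x * y⁻¹), h⟩) (fun _ => 0)

/-- `f̌`, where `f̌(y) = f(y⁻¹)`, as an element of `E(G)` (junk value `0` if it fails
to be smooth, which never happens). -/
noncomputable def checkE (f : EC G) : EC G :=
  @dite _ (IsCInf fun y => (f : G → ℂ) y⁻¹) (Classical.dec _)
    (fun h => ⟨fun y => (f : G → ℂ) y⁻¹, h⟩) (fun _ => 0)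

/-- The left translate `f ∘ L_x`, as an element of `E(G)` (junk value `0` if it fails
to be smooth, which never happens). -/
noncomputable def translE (x : G) (f : EC G) : EC G :=
  @dite _ (IsCInf fun y => (f : G → ℂ) (x * y)) (Classical.dec _)
    (fun h => ⟨fun y => (f : G → ℂ) (x * y), h⟩) (fun _ => 0)

/-- The support of a distribution `u` on `G`: the set of points `x` such that every
neighborhood `U` of `x` supports some smooth function `f` with `u(f) ≠ 0`. -/
def distSupp (u : EC G → ℂ) : Set G :=
  {x | ∀ U ∈ 𝓝 x, ∃ f : EC G, tsupport (f : G → ℂ) ⊆ U ∧ u f ≠ 0}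

/-- `D` is a local operator: it does not increase supports. -/
def IsLocalOp (D : EC G →ₗ[ℂ] EC G) : Prop :=
  Continuous[smoothTop ℂ G ℂ, smoothTop ℂ G ℂ] D ∧
    ∀ f : EC G, tsupport ((D f : G → ℂ)) ⊆ tsupport (f : G → ℂ)

/-- `D` commutes with all left translations. -/
def IsLeftInvariant (D : EC G →ₗ[ℂ] EC G) : Prop :=
  ∀ (x : G) (f : EC G), D (translE x f) = translE x (D f)

end ComplexValued



section TaylorAux

variable {G : Type*} [Group G] [TopologicalSpace G] [IsTopologicalGroup G]
variable {Y : Type*} [AddCommGroup Y] [Module ℝ Y] [TopologicalSpace Y]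

lemma hb_seminorm' (p : Seminorm ℝ Y) (y : Y) :
    ∃ ℓ : Y →ₗ[ℝ] ℝ, ℓ y = p y ∧ ∀ x, ℓ x ≤ p x := by
  by_cases hy : y = 0
  · exact ⟨0, by simp [hy], fun x => apply_nonneg p x⟩
  · have H : ∀ c : ℝ, c • y = 0 → c • (p y : ℝ) = 0 := by
      intro c hc
      rcases smul_eq_zero.mp hc with h | h
      · simp [h]
      · exact absurd h hy
    set f := LinearPMap.mkSpanSingleton' (σ := RingHom.id ℝ) y (p y : ℝ) H with hf
    have hdom : y ∈ f.domain := by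
      rw [LinearPMap.domain_mkSpanSingleton]
      exact Submodule.mem_span_singleton_self y
    obtain ⟨ℓ, hℓ1, hℓ2⟩ := exists_extension_of_le_sublinear f p
      (fun c hc x => by rw [map_smul_eq_mul, Real.norm_eq_abs, abs_of_pos hc])
      (fun x y => map_add_le_add p x y)
      (by
        rintro ⟨x, hx⟩
        rw [LinearPMap.domain_mkSpanSingleton, Submodule.mem_span_singleton] at hx
        obtain ⟨c, rfl⟩ := hx
        have : f ⟨c • y, by rw [LinearPMap.domain_mkSpanSingleton]; exact Submodule.smul_mem _ _ (Submodule.mem_span_singleton_self y)⟩ = c • (p y : ℝ) :=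
          LinearPMap.mkSpanSingleton'_apply y _ H c _
        rw [this]
        calc c • (p y : ℝ) = c * p y := smul_eq_mul c (p y)
        _ ≤ |c| * p y := mul_le_mul_of_nonneg_right (le_abs_self c) (apply_nonneg p y)
        _ = p (c • y) := by rw [map_smul_eq_mul, Real.norm_eq_abs])
    refine ⟨ℓ, ?_, hℓ2⟩
    have := hℓ1 ⟨y, hdom⟩
    rwa [LinearPMap.mkSpanSingleton'_apply_self] at this

lemma oneParam_zero' (X : ↥(OneParam G)) : X.1 0 = 1 := by
  have h1 : X.1 0 * X.1 0 = X.1 0 * 1 := by rw [mul_one, ← X.2 0 0, add_zero]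
  exact mul_left_cancel h1

lemma key_mvt' [IsTopologicalAddGroup Y] (h : G → Y) (X : ↥(OneParam G)) (D : G → Y)
    (hd : ∀ g, HasLieDeriv h X g (D g)) (p : Seminorm ℝ Y) (hp : Continuous p)
    {t : ℝ} (ht : t ≠ 0) (g : G) :
    ∃ c : ℝ, |c| < |t| ∧ p (t⁻¹ • (h (g * X.1 t) - h g) - D g) ≤ p (D (g * X.1 c) - D g) := by
  set y := t⁻¹ • (h (g * X.1 t) - h g) - D g with hy
  obtain ⟨ℓ, hℓ1, hℓ2⟩ := hb_seminorm' p y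
  have habs : ∀ z, |ℓ z| ≤ p z := by
    intro z
    refine abs_le.mpr ⟨?_, hℓ2 z⟩
    have := hℓ2 (-z)
    rw [ℓ.map_neg] at this
    simpa using neg_le_neg this
  have hℓcont : Continuous ℓ := by
    refine continuous_of_continuousAt_zero ℓ.toAddMonoidHom ?_
    have h0 : Tendsto (fun z => ℓ z) (𝓝 0) (𝓝 0) :=
      squeeze_zero_norm (fun z => by simpa [Real.norm_eq_abs] using habs z)
        (by simpa using hp.tendsto' 0 0 (map_zero p))
    simpa [ContinuousAt, map_zero] using h0
  set u : ℝ → ℝ := fun s => ℓ (h (g * X.1 s)) with hu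
  have hderiv : ∀ s : ℝ, HasDerivAt u (ℓ (D (g * X.1 s))) s := by
    intro s
    rw [hasDerivAt_iff_tendsto_slope_zero]
    have := (hℓcont.tendsto _).comp (hd (g * X.1 s))
    refine this.congr fun r => ?_
    simp only [Function.comp_apply, hu, map_smul, map_sub, smul_eq_mul]
    rw [mul_assoc, ← X.2 s r]
  have hmvt : ∃ c : ℝ, |c| < |t| ∧ ℓ (D (g * X.1 c)) = (u t - u 0) / t := by
    rcases ht.lt_or_gt with htn | htp
    · obtain ⟨c, hc, hceq⟩ := exists_hasDerivAt_eq_slope u (fun s => ℓ (D (g * X.1 s))) htn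
        (fun s _ => (hderiv s).continuousAt.continuousWithinAt) (fun s _ => hderiv s)
      refine ⟨c, ?_, ?_⟩
      · rw [abs_of_neg hc.2, abs_of_neg htn]
        linarith [hc.1]
      · rw [hceq, zero_sub, div_neg]; ring
    · obtain ⟨c, hc, hceq⟩ := exists_hasDerivAt_eq_slope u (fun s => ℓ (D (g * X.1 s))) htp
        (fun s _ => (hderiv s).continuousAt.continuousWithinAt) (fun s _ => hderiv s)
      refine ⟨c, ?_, ?_⟩
      · rw [abs_of_pos hc.1, abs_of_pos htp]; exact hc.2
      · rw [hceq, sub_zero]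
  obtain ⟨c, hc, hceq⟩ := hmvt
  refine ⟨c, hc, ?_⟩
  have hpy : p y = ℓ y := hℓ1.symm
  have hu0 : u 0 = ℓ (h g) := by rw [hu]; simp [oneParam_zero' X]
  have hly : ℓ y = ℓ (D (g * X.1 c) - D g) := by
    rw [hy]
    simp only [map_sub, map_smul, smul_eq_mul]
    rw [hceq, hu0, hu]
    field_simp
  rw [hpy, hly]
  exact (le_abs_self _).trans (habs _)

end TaylorAux

/-- First-order Taylor expansion with continuous remainder, for a continuous function
whose derivative along the one-parameter subgroup `X` exists and is continuous. -/
theorem taylor_expansion_order_one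
    {H : Type*} [Group H] [TopologicalSpace H] [IsTopologicalGroup H]
    {Y : Type*} [AddCommGroup Y] [Module ℝ Y] [TopologicalSpace Y]
    [IsTopologicalAddGroup Y] [ContinuousSMul ℝ Y] [LocallyConvexSpace ℝ Y]
    (h : H → Y) (hh : Continuous h) (X : ↥(OneParam H)) (D : H → Y)
    (hD : Continuous D) (hd : ∀ g : H, HasLieDeriv h X g (D g)) :
    ∃ χ : ℝ × H → Y, Continuous χ ∧ (∀ g : H, χ (0, g) = 0) ∧
      ∀ (t : ℝ) (g : H), h (g * X.1 t) = h g + t • D g + t • χ (t, g) := by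
  classical
  set F : ℝ × H → Y := fun q => q.1⁻¹ • (h (q.2 * X.1 q.1) - h q.2) - D q.2 with hF
  set χ : ℝ × H → Y := fun q => if q.1 = 0 then 0 else F q with hχ
  have hws : WithSeminorms (gaugeSeminormFamily ℝ Y) := with_gaugeSeminormFamily
  refine ⟨χ, ?_, fun g => if_pos rfl, ?_⟩
  · rw [continuous_iff_continuousAt]
    rintro ⟨t₀, g₀⟩
    by_cases ht₀ : t₀ = 0
    · subst ht₀
      have hχ0 : χ (0, g₀) = 0 := if_pos rfl
      rw [ContinuousAt, hχ0, hws.tendsto_nhds]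
      intro i ε hε
      set p := gaugeSeminormFamily ℝ Y i with hpdef
      have hp : Continuous p := hws.continuous_seminorm i
      have hΨ : Continuous fun q : ℝ × H => p (D (q.2 * X.1 q.1) - D q.2) :=
        hp.comp ((hD.comp (continuous_snd.mul
          (X.1.continuous.comp continuous_fst))).sub (hD.comp continuous_snd))
      have hmem : {q : ℝ × H | p (D (q.2 * X.1 q.1) - D q.2) < ε} ∈ 𝓝 ((0 : ℝ), g₀) := by
        refine (hΨ.isOpen_preimage _ isOpen_Iio).mem_nhds ?_
        simp [oneParam_zero' X, hε]
      rw [mem_nhds_prod_iff] at hmem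
      obtain ⟨u, hu, v, hv, huv⟩ := hmem
      obtain ⟨δ, hδ, hball⟩ := Metric.mem_nhds_iff.mp hu
      have hprod : Metric.ball (0 : ℝ) δ ×ˢ v ∈ 𝓝 ((0 : ℝ), g₀) :=
        prod_mem_nhds (Metric.ball_mem_nhds 0 hδ) hv
      filter_upwards [hprod] with q hq
      obtain ⟨hq1, hq2⟩ := hq
      rcases eq_or_ne q.1 0 with hq0 | hq0
      · have : χ q = 0 := if_pos hq0
        simpa [this] using hε
      · obtain ⟨c, hc1, hc2⟩ := key_mvt' h X D hd p hp hq0 q.2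
        have hcmem : (c, q.2) ∈ u ×ˢ v := by
          constructor
          · apply hball
            simp only [Metric.mem_ball, Real.dist_eq, sub_zero] at hq1 ⊢
            exact hc1.trans hq1
          · exact hq2
        have hlt := huv hcmem
        have hχq : χ q = F q := if_neg hq0
        rw [sub_zero, hχq]
        exact lt_of_le_of_lt hc2 hlt
    · have hFc : ContinuousAt F (t₀, g₀) := by
        refine ContinuousAt.sub (ContinuousAt.smul (continuousAt_fst.inv₀ ht₀) ?_)
          (hD.comp continuous_snd).continuousAt
        exact (((hh.comp (continuous_snd.mul
          (X.1.continuous.comp continuous_fst))).sub (hh.comp continuous_snd))).continuousAt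
      refine hFc.congr ?_
      have hopen : {q : ℝ × H | q.1 ≠ 0} ∈ 𝓝 (t₀, g₀) :=
        ((isOpen_compl_singleton.preimage continuous_fst).mem_nhds ht₀)
      filter_upwards [hopen] with q hq
      exact (if_neg hq).symm
  · intro t g
    rcases eq_or_ne t 0 with rfl | ht
    · simp [oneParam_zero' X]
    · have : χ (t, g) = F (t, g) := if_neg ht
      rw [this, hF]
      simp only [smul_sub, smul_inv_smul₀ ht]
      abel
end

section
/- Let G be a topological group, Y a locally convex space, V ⊆ G open, and φ : V → Y a function of class C¹ along one-parameter subgroups (i.e. (g,γ) ↦ (D_γ φ)(g) := lim_{t→0}(φ(gγ(t)) − φ(g))/t exists and is continuous on V × L(G)). Then for x ∈ G with x⁻¹ ∈ V and γ ∈ L(G), the function φ̌(y) := φ(y⁻¹) satisfies (D_γ φ̌)(x) = −(D_{Ad_G(x)γ} φ)(x⁻¹). -/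
set_option linter.unusedSectionVars false

open Filter Topology Set

/-- For a `C¹` function `φ` on an open set `V` and `φ̌(y) = φ(y⁻¹)`, one has
`(D_γ φ̌)(x) = -(D_{Ad_G(x)γ} φ)(x⁻¹)`. -/
theorem check_derivative_formula
    {G : Type*} [Group G] [TopologicalSpace G] [IsTopologicalGroup G]
    {Y : Type*} [AddCommGroup Y] [Module ℝ Y] [TopologicalSpace Y]
    [IsTopologicalAddGroup Y] [ContinuousSMul ℝ Y] [LocallyConvexSpace ℝ Y]
    (V : Set G) (hV : IsOpen V) (φ : G → Y) (Dφ : G → ↥(OneParam G) → Y)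
    (hd : ∀ g ∈ V, ∀ γ : ↥(OneParam G), HasLieDeriv φ γ g (Dφ g γ))
    (hc : ContinuousOn (fun p : G × ↥(OneParam G) => Dφ p.1 p.2) (V ×ˢ Set.univ))
    (x : G) (hx : x⁻¹ ∈ V) (γ : ↥(OneParam G)) :
    HasLieDeriv (fun y => φ y⁻¹) γ x (-(Dφ x⁻¹ (adOP x γ))) := by
  have h0 : γ.1 0 = 1 := by
    have h := γ.2 0 0
    simp only [add_zero] at h
    exact (mul_eq_left.mp h.symm)
  have hinv : ∀ t : ℝ, (γ.1 t)⁻¹ = γ.1 (-t) := by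
    intro t
    have h := γ.2 t (-t)
    rw [add_neg_cancel, h0] at h
    exact (eq_inv_of_mul_eq_one_right h.symm).symm
  have hβ := hd x⁻¹ hx (adOP x γ)
  have hneg : Tendsto (fun t : ℝ => -t) (𝓝[≠] (0 : ℝ)) (𝓝[≠] (0 : ℝ)) := by
    apply tendsto_nhdsWithin_of_tendsto_nhds_of_eventually_within
    · simpa using (continuous_neg.tendsto (0 : ℝ)).mono_left nhdsWithin_le_nhds
    · filter_upwards [self_mem_nhdsWithin] with t ht using neg_ne_zero.mpr ht
  have key := (hβ.comp hneg).neg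
  refine key.congr fun t => ?_
  have harg : x⁻¹ * (adOP x γ).1 (-t) = (x * γ.1 t)⁻¹ := by
    simp only [adOP, ContinuousMap.coe_mk]
    rw [mul_inv_rev, hinv t]
    group
  simp only [Function.comp_apply, harg]
  rw [inv_neg, neg_smul, neg_neg]
end

section
/- Let G be a topological group. The map φ ↦ φ̌, where φ̌(x) = φ(x⁻¹), is a linear bijection of C^∞(G) onto itself which is an isomorphism of locally convex spaces for the topology generated by the seminorms p_{K₁,K₂}(f) = sup{|(D^λ_γ f)(x)| : γ ∈ K₁, x ∈ K₂} over compact K₁ ⊆ L(G)^k (k ≥ 0) and compact K₂ ⊆ G. -/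
set_option linter.unusedSectionVars false

open Filter Topology Set

section CheckAux

open MeasureTheory intervalIntegral

variable {G : Type*} [Group G] [TopologicalSpace G] [IsTopologicalGroup G]

theorem op_add (γ : ↥(OneParam G)) (t s : ℝ) : γ.1 (t + s) = γ.1 t * γ.1 s := γ.2 t s

theorem op_zero (γ : ↥(OneParam G)) : γ.1 0 = 1 := by
  have h := γ.2 0 0
  rw [add_zero] at h
  exact (left_eq_mul.1 h)

theorem op_neg (γ : ↥(OneParam G)) (t : ℝ) : γ.1 (-t) = (γ.1 t)⁻¹ := by
  have h := γ.2 (-t) t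
  rw [neg_add_cancel, op_zero] at h
  exact eq_inv_of_mul_eq_one_left h.symm

theorem continuous_adOP : Continuous fun p : G × ↥(OneParam G) => adOP p.1 p.2 := by
  apply Continuous.subtype_mk
  apply ContinuousMap.continuous_of_continuous_uncurry
  have heval : Continuous fun q : ↥(OneParam G) × ℝ => q.1.1 q.2 :=
    continuous_eval.comp
      ((continuous_subtype_val.comp continuous_fst).prodMk continuous_snd)
  exact ((continuous_fst.fst).mul
    (heval.comp (continuous_fst.snd.prodMk continuous_snd))).mul continuous_fst.fst.inv

theorem continuous_adOP_param {X : Type*} [TopologicalSpace X] {a : X → G}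
    {b : X → ↥(OneParam G)} (ha : Continuous a) (hb : Continuous b) :
    Continuous fun x => adOP (a x) (b x) :=
  continuous_adOP.comp (ha.prodMk hb)

theorem hasDerivAt_shift {f : ℝ → ℂ} {v : ℂ} {t₀ : ℝ}
    (h : HasDerivAt (fun τ => f (t₀ + τ)) v 0) : HasDerivAt f v t₀ := by
  have hin : HasDerivAt (fun t : ℝ => t - t₀) 1 t₀ := (hasDerivAt_id t₀).sub_const t₀
  have h0 : HasDerivAt (fun τ => f (t₀ + τ)) v (t₀ - t₀) := by
    rw [sub_self]; exact h
  have h2 := HasDerivAt.scomp t₀ (by exact h0) hin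
  have hfun : (fun τ => f (t₀ + τ)) ∘ (fun t : ℝ => t - t₀) = f := by
    funext t; simp [Function.comp]
  simpa [hfun] using h2

theorem fubini_cont {f : ℝ → ℝ → ℂ} (hf : Continuous fun p : ℝ × ℝ => f p.1 p.2)
    (a b c d : ℝ) :
    ∫ x in a..b, ∫ y in c..d, f x y = ∫ y in c..d, ∫ x in a..b, f x y := by
  have core : ∀ (a b c d : ℝ), a ≤ b → c ≤ d →
      ∫ x in a..b, ∫ y in c..d, f x y = ∫ y in c..d, ∫ x in a..b, f x y := by
    intro a b c d hab hcd
    rw [intervalIntegral.integral_of_le hab, intervalIntegral.integral_of_le hcd]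
    simp only [intervalIntegral.integral_of_le hab, intervalIntegral.integral_of_le hcd]
    apply MeasureTheory.integral_integral_swap
    rw [MeasureTheory.Measure.prod_restrict]
    refine MeasureTheory.IntegrableOn.mono_set ?_
      (Set.prod_mono Set.Ioc_subset_Icc_self Set.Ioc_subset_Icc_self)
    exact hf.continuousOn.integrableOn_compact (isCompact_Icc.prod isCompact_Icc)
  rcases le_total a b with hab | hab <;> rcases le_total c d with hcd | hcd
  · exact core a b c d hab hcd
  · simp only [intervalIntegral.integral_symm d c]
    rw [intervalIntegral.integral_neg, core a b d c hab hcd]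
  · simp only [intervalIntegral.integral_symm b a]
    rw [intervalIntegral.integral_neg, core b a c d hab hcd]
  · simp only [intervalIntegral.integral_symm b a, intervalIntegral.integral_symm d c]
    simp only [intervalIntegral.integral_neg, neg_neg]
    rw [core b a d c hab hcd]

variable {φ : G → ℂ} {F : ∀ k : ℕ, G → (Fin k → ↥(OneParam G)) → ℂ}

theorem SmoothSeq.cont' (hF : SmoothSeq φ F) (k : ℕ) :
    Continuous fun p : G × (Fin k → ↥(OneParam G)) => F k p.1 p.2 :=
  (hF k).2.2 k le_rfl

theorem SmoothSeq.hasDerivAt0 (hF : SmoothSeq φ F) (k : ℕ) (x : G) (γ : ↥(OneParam G))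
    (α : Fin k → ↥(OneParam G)) :
    HasDerivAt (fun s : ℝ => F k (x * γ.1 s) α) (F (k+1) x (Fin.snoc α γ)) 0 := by
  have h := (hF (k+1)).2.1 k (Nat.lt_succ_self k) x (Fin.snoc α γ)
  have h1 : (fun i : Fin k => (Fin.snoc α γ : Fin (k+1) → ↥(OneParam G)) i.castSucc) = α :=
    funext fun i => Fin.snoc_castSucc _ _ _
  rw [hasDerivAt_iff_tendsto_slope]
  unfold HasLieDeriv at h
  rw [h1, Fin.snoc_last] at h
  refine h.congr fun t => ?_
  rw [slope_def_module]
  simp [op_zero]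

theorem SmoothSeq.translate (hF : SmoothSeq φ F) (h : G) :
    SmoothSeq (fun z => φ (h * z)) (fun k z α => F k (h * z) α) := by
  intro n
  refine ⟨fun g γ => (hF n).1 (h*g) γ, fun k hk g γ => ?_, fun k hk => ?_⟩
  · have h2 := (hF n).2.1 k hk (h*g) γ
    unfold HasLieDeriv at h2 ⊢
    simpa [mul_assoc] using h2
  · exact ((hF n).2.2 k hk).comp
      (((continuous_const.mul continuous_fst)).prodMk continuous_snd)

theorem crux : ∀ (k : ℕ) {φ : G → ℂ} {F : ∀ k : ℕ, G → (Fin k → ↥(OneParam G)) → ℂ},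
    SmoothSeq φ F → ∀ (g : G) (δ : ↥(OneParam G)) (η : Fin k → ↥(OneParam G)),
    HasDerivAt (fun t : ℝ => F k ((g * δ.1 t)⁻¹) (fun i => adOP (g * δ.1 t) (η i)))
      (-(F (k+1) g⁻¹ (Fin.cons (adOP g δ) (fun i => adOP g (η i))))) 0 := by
  intro k
  induction k with
  | zero =>
    intro φ F hF g δ η
    have h0 := hF.hasDerivAt0 0 g⁻¹ (adOP g δ) (fun i => adOP g (η i))
    have hneg : HasDerivAt (fun t : ℝ => -t) (-1 : ℝ) 0 := (hasDerivAt_id (0:ℝ)).neg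
    have h0' : HasDerivAt (fun s => F 0 (g⁻¹ * (adOP g δ).1 s) (fun i => adOP g (η i)))
        (F 1 g⁻¹ (Fin.snoc (fun i => adOP g (η i)) (adOP g δ))) ((fun t : ℝ => -t) 0) := by
      simpa using h0
    have h1 := HasDerivAt.scomp (0:ℝ) h0' hneg
    have hfun : ((fun s => F 0 (g⁻¹ * (adOP g δ).1 s) (fun i => adOP g (η i)))
          ∘ (fun t : ℝ => -t))
        = fun t : ℝ => F 0 ((g * δ.1 t)⁻¹) (fun i => adOP (g * δ.1 t) (η i)) := by
      funext t
      have hbase : g⁻¹ * (adOP g δ).1 (-t) = (g * δ.1 t)⁻¹ := by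
        show g⁻¹ * (g * δ.1 (-t) * g⁻¹) = _
        rw [op_neg, mul_inv_rev]
        group
      show F 0 (g⁻¹ * (adOP g δ).1 (-t)) _ = _
      rw [hbase, (hF 0).1, (hF 0).1]
    have htuple : (Fin.snoc (fun i : Fin 0 => adOP g (η i)) (adOP g δ) : Fin 1 → ↥(OneParam G))
        = Fin.cons (adOP g δ) (fun i : Fin 0 => adOP g (η i)) := by
      funext i
      fin_cases i
      simp [Fin.snoc, Fin.cons]
    rw [hfun, htuple] at h1
    simpa using h1
  | succ k IH =>
    intro φ F hF g δ η
    set η' : Fin k → ↥(OneParam G) := fun i => η i.castSucc with hη'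
    set L : ↥(OneParam G) := η (Fin.last k) with hLdef
    set y : ℝ → ℝ → G := fun s t => L.1 s * (g * δ.1 t)⁻¹ with hy
    set W : ℝ → ℝ → ℂ := fun s t => F k (y s t) (fun i => adOP (g * δ.1 t) (η' i)) with hW
    set V : ℝ → ℝ → ℂ := fun s t => F (k+1) (y s t)
        (Fin.cons (adOP (g * δ.1 t) δ) (fun i => adOP (g * δ.1 t) (η' i))) with hV
    set P : ℝ → ℝ → ℂ := fun s t => F (k+1) (y s t)
        (Fin.snoc (fun i => adOP (g * δ.1 t) (η' i)) (adOP (y s t)⁻¹ L)) with hP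
    set G2 : ℝ → ℝ → ℂ := fun s t => F (k+2) (y s t)
        (Fin.snoc (Fin.cons (adOP (g * δ.1 t) δ) (fun i => adOP (g * δ.1 t) (η' i)))
          (adOP (y s t)⁻¹ L)) with hG2
    have hLc : Continuous (fun s : ℝ => L.1 s) := L.1.continuous
    have hδc : Continuous (fun t : ℝ => δ.1 t) := δ.1.continuous
    have hyc : Continuous fun p : ℝ × ℝ => y p.1 p.2 :=
      (hLc.comp continuous_fst).mul ((continuous_const.mul (hδc.comp continuous_snd)).inv)
    have hA : ∀ γ0 : ↥(OneParam G), Continuous fun t : ℝ => adOP (g * δ.1 t) γ0 :=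
      fun γ0 => continuous_adOP_param (continuous_const.mul hδc) continuous_const
    have hA2 : Continuous fun p : ℝ × ℝ => adOP (y p.1 p.2)⁻¹ L :=
      continuous_adOP_param hyc.inv continuous_const
    have htuplec : Continuous fun p : ℝ × ℝ => (fun i => adOP (g * δ.1 p.2) (η' i)) :=
      continuous_pi fun i => (hA (η' i)).comp continuous_snd
    have hconsc : Continuous fun p : ℝ × ℝ =>
        (Fin.cons (adOP (g * δ.1 p.2) δ) (fun i => adOP (g * δ.1 p.2) (η' i)) :
          Fin (k+1) → ↥(OneParam G)) := by
      apply continuous_pi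
      intro i
      refine Fin.cases ?_ ?_ i
      · simpa [Function.comp_def] using (hA δ).comp continuous_snd
      · intro j; simpa [Function.comp_def] using (hA (η' j)).comp continuous_snd
    have hsnoc1 : Continuous fun p : ℝ × ℝ =>
        (Fin.snoc (fun i => adOP (g * δ.1 p.2) (η' i)) (adOP (y p.1 p.2)⁻¹ L) :
          Fin (k+1) → ↥(OneParam G)) := by
      apply continuous_pi
      intro i
      refine Fin.lastCases ?_ ?_ i
      · simpa using hA2
      · intro j; simpa [Function.comp_def] using (hA (η' j)).comp continuous_snd
    have hsnoc2 : Continuous fun p : ℝ × ℝ =>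
        (Fin.snoc (Fin.cons (adOP (g * δ.1 p.2) δ) (fun i => adOP (g * δ.1 p.2) (η' i)))
          (adOP (y p.1 p.2)⁻¹ L) : Fin (k+2) → ↥(OneParam G)) := by
      apply continuous_pi
      intro i
      refine Fin.lastCases ?_ ?_ i
      · simpa using hA2
      · intro j
        simp only [Fin.snoc_castSucc]
        exact (continuous_apply j).comp hconsc
    have hVc : Continuous fun p : ℝ × ℝ => V p.1 p.2 :=
      (hF.cont' (k+1)).comp (hyc.prodMk hconsc)
    have hPc : Continuous fun p : ℝ × ℝ => P p.1 p.2 :=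
      (hF.cont' (k+1)).comp (hyc.prodMk hsnoc1)
    have hG2c : Continuous fun p : ℝ × ℝ => G2 p.1 p.2 :=
      (hF.cont' (k+2)).comp (hyc.prodMk hsnoc2)
    -- derivative of W in t
    have hWt : ∀ s t₀, HasDerivAt (fun t => W s t) (-(V s t₀)) t₀ := by
      intro s t₀
      apply hasDerivAt_shift
      have hIH := IH (hF.translate (L.1 s)) (g * δ.1 t₀) δ η'
      have hfun : (fun τ => W s (t₀ + τ)) = fun τ =>
          F k (L.1 s * ((g * δ.1 t₀) * δ.1 τ)⁻¹)
            (fun i => adOP ((g * δ.1 t₀) * δ.1 τ) (η' i)) := by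
        funext τ
        simp only [hW, hy]
        rw [op_add δ t₀ τ, mul_assoc]
      rw [hfun]
      exact hIH
    -- derivative of V in s
    have hVs : ∀ s r, HasDerivAt (fun σ => V σ r) (G2 s r) s := by
      intro s r
      apply hasDerivAt_shift
      have h0 := hF.hasDerivAt0 (k+1) (y s r) (adOP (y s r)⁻¹ L)
          (Fin.cons (adOP (g * δ.1 r) δ) (fun i => adOP (g * δ.1 r) (η' i)))
      have hfun : (fun τ => V (s + τ) r) = fun τ =>
          F (k+1) (y s r * (adOP (y s r)⁻¹ L).1 τ)
            (Fin.cons (adOP (g * δ.1 r) δ) (fun i => adOP (g * δ.1 r) (η' i))) := by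
        funext τ
        simp only [hV, hy]
        congr 1
        show L.1 (s + τ) * (g * δ.1 r)⁻¹
          = L.1 s * (g * δ.1 r)⁻¹ *
            ((L.1 s * (g * δ.1 r)⁻¹)⁻¹ * L.1 τ * ((L.1 s * (g * δ.1 r)⁻¹)⁻¹)⁻¹)
        rw [add_comm s τ, op_add]
        group
      rw [hfun]
      exact h0
    -- derivative of W in s
    have hWs : ∀ s t, HasDerivAt (fun σ => W σ t) (P s t) s := by
      intro s t
      apply hasDerivAt_shift
      have h0 := hF.hasDerivAt0 k (y s t) (adOP (y s t)⁻¹ L)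
          (fun i => adOP (g * δ.1 t) (η' i))
      have hfun : (fun τ => W (s + τ) t) = fun τ =>
          F k (y s t * (adOP (y s t)⁻¹ L).1 τ) (fun i => adOP (g * δ.1 t) (η' i)) := by
        funext τ
        simp only [hW, hy]
        congr 1
        show L.1 (s + τ) * (g * δ.1 t)⁻¹
          = L.1 s * (g * δ.1 t)⁻¹ *
            ((L.1 s * (g * δ.1 t)⁻¹)⁻¹ * L.1 τ * ((L.1 s * (g * δ.1 t)⁻¹)⁻¹)⁻¹)
        rw [add_comm s τ, op_add]
        group
      rw [hfun]
      exact h0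
    -- FTC identities
    have key1 : ∀ s t, ∫ r in (0:ℝ)..t, V s r = W s 0 - W s t := by
      intro s t
      have h := intervalIntegral.integral_eq_sub_of_hasDerivAt (fun r _ => hWt s r)
        (((hVc.comp (continuous_const.prodMk continuous_id)).neg).intervalIntegrable 0 t)
      rw [intervalIntegral.integral_neg] at h
      linear_combination -h
    have key2 : ∀ s r, ∫ σ in (0:ℝ)..s, G2 σ r = V s r - V 0 r := fun s r =>
      intervalIntegral.integral_eq_sub_of_hasDerivAt (fun σ _ => hVs σ r)
        ((hG2c.comp (continuous_id.prodMk continuous_const)).intervalIntegrable 0 s)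
    have key3 : ∀ s t, ∫ σ in (0:ℝ)..s, P σ t = W s t - W 0 t := fun s t =>
      intervalIntegral.integral_eq_sub_of_hasDerivAt (fun σ _ => hWs σ t)
        ((hPc.comp (continuous_id.prodMk continuous_const)).intervalIntegrable 0 s)
    -- the main identity
    have main : ∀ t, P 0 t - P 0 0 = -∫ r in (0:ℝ)..t, G2 0 r := by
      intro t
      have hPt : Continuous fun σ => P σ t :=
        hPc.comp (continuous_id.prodMk continuous_const)
      have hP0 : Continuous fun σ => P σ 0 :=
        hPc.comp (continuous_id.prodMk continuous_const)
      have hGσ : Continuous fun σ => ∫ r in (0:ℝ)..t, G2 σ r :=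
        intervalIntegral.continuous_parametric_intervalIntegral_of_continuous'
          (by exact hG2c) 0 t
      have hs1 : (fun s => ∫ σ in (0:ℝ)..s, (P σ t - P σ 0))
          = fun s => ∫ σ in (0:ℝ)..s, -(∫ r in (0:ℝ)..t, G2 σ r) := by
        funext s
        have e1 : ∫ σ in (0:ℝ)..s, (P σ t - P σ 0)
            = (∫ σ in (0:ℝ)..s, P σ t) - ∫ σ in (0:ℝ)..s, P σ 0 :=
          intervalIntegral.integral_sub (hPt.intervalIntegrable 0 s)
            (hP0.intervalIntegrable 0 s)
        have e2 : ∫ σ in (0:ℝ)..s, -(∫ r in (0:ℝ)..t, G2 σ r)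
            = -∫ r in (0:ℝ)..t, ∫ σ in (0:ℝ)..s, G2 σ r := by
          rw [intervalIntegral.integral_neg, fubini_cont hG2c]
        rw [e1, e2, key3, key3]
        simp only [key2]
        have e3 : ∫ r in (0:ℝ)..t, (V s r - V 0 r)
            = (∫ r in (0:ℝ)..t, V s r) - ∫ r in (0:ℝ)..t, V 0 r :=
          intervalIntegral.integral_sub
            ((hVc.comp (continuous_const.prodMk continuous_id)).intervalIntegrable 0 t)
            ((hVc.comp (continuous_const.prodMk continuous_id)).intervalIntegrable 0 t)
        rw [e3, key1, key1]
        ring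
      have hL1 : HasDerivAt (fun s => ∫ σ in (0:ℝ)..s, (P σ t - P σ 0)) (P 0 t - P 0 0) 0 :=
        intervalIntegral.integral_hasDerivAt_right
          ((hPt.sub hP0).intervalIntegrable 0 0)
          ((hPt.sub hP0).stronglyMeasurableAtFilter _ _)
          (hPt.sub hP0).continuousAt
      have hR1 : HasDerivAt (fun s => ∫ σ in (0:ℝ)..s, -(∫ r in (0:ℝ)..t, G2 σ r))
          (-(∫ r in (0:ℝ)..t, G2 0 r)) 0 :=
        intervalIntegral.integral_hasDerivAt_right
          (hGσ.neg.intervalIntegrable 0 0)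
          (hGσ.neg.stronglyMeasurableAtFilter _ _)
          hGσ.neg.continuousAt
      exact hL1.unique (hs1 ▸ hR1)
    -- final derivative of t ↦ P 0 t
    have contG : Continuous fun r => G2 0 r :=
      hG2c.comp (continuous_const.prodMk continuous_id)
    have hfinal : HasDerivAt (fun t => P 0 t) (-(G2 0 0)) 0 := by
      have hfun2 : (fun t => P 0 t) = fun t => P 0 0 + -∫ r in (0:ℝ)..t, G2 0 r := by
        funext t
        linear_combination main t
      rw [hfun2]
      have hint : HasDerivAt (fun t => ∫ r in (0:ℝ)..t, G2 0 r) (G2 0 0) 0 :=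
        intervalIntegral.integral_hasDerivAt_right
          (contG.intervalIntegrable 0 0)
          (contG.stronglyMeasurableAtFilter _ _)
          contG.continuousAt
      exact hint.neg.const_add (P 0 0)
    -- identify the goal with P 0 t
    have hgoalfun : (fun t : ℝ => F (k+1) ((g * δ.1 t)⁻¹) (fun i => adOP (g * δ.1 t) (η i)))
        = fun t => P 0 t := by
      funext t
      simp only [hP, hy, op_zero, one_mul, inv_inv]
      congr 1
      funext i
      refine Fin.lastCases ?_ ?_ i
      · rw [Fin.snoc_last]
      · intro j; rw [Fin.snoc_castSucc]
    have hval : G2 0 0 = F (k+1+1) g⁻¹ (Fin.cons (adOP g δ) (fun i => adOP g (η i))) := by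
      simp only [hG2, hy, op_zero, mul_one, one_mul, inv_inv]
      congr 1
      rw [← Fin.cons_snoc_eq_snoc_cons]
      funext i
      refine Fin.cases ?_ ?_ i
      · simp
      · intro j
        simp only [Fin.cons_succ]
        refine Fin.lastCases ?_ ?_ j
        · rw [Fin.snoc_last]
        · intro m
          rw [Fin.snoc_castSucc]
    rw [hgoalfun, ← hval]
    exact hfinal

theorem hasLieDeriv_of_hasDerivAt {f : G → ℂ} {γ : ↥(OneParam G)} {g : G} {v : ℂ}
    (h : HasDerivAt (fun t : ℝ => f (g * γ.1 t)) v 0) : HasLieDeriv f γ g v := by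
  rw [hasDerivAt_iff_tendsto_slope] at h
  exact h.congr fun t => by rw [slope_def_module]; simp [op_zero]

theorem fin_rev_zero_eq_last (k : ℕ) : Fin.rev (0 : Fin (k+1)) = Fin.last k := by
  ext; simp [Fin.val_rev]

theorem fin_rev_succ_eq_castSucc {k : ℕ} (j : Fin k) :
    Fin.rev j.succ = (Fin.rev j).castSucc := by
  ext
  simp only [Fin.val_rev, Fin.coe_castSucc, Fin.val_succ]
  omega

theorem SmoothSeq.check {φ : G → ℂ} {F : ∀ k : ℕ, G → (Fin k → ↥(OneParam G)) → ℂ}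
    (hF : SmoothSeq φ F) :
    SmoothSeq (fun x : G => φ x⁻¹)
      (fun k x γ => (-1 : ℂ)^k * F k x⁻¹ (fun i => adOP x (γ (Fin.rev i)))) := by
  intro n
  refine ⟨fun g γ => by simp [(hF 0).1], fun k _ g γ => ?_, fun k _ => ?_⟩
  · apply hasLieDeriv_of_hasDerivAt
    have h1 := (crux k hF g (γ (Fin.last k))
      (fun i => γ ((Fin.rev i).castSucc))).const_mul ((-1:ℂ)^k)
    have hT : (fun i : Fin (k+1) => adOP g (γ (Fin.rev i)))
        = Fin.cons (adOP g (γ (Fin.last k)))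
            (fun i : Fin k => adOP g (γ ((Fin.rev i).castSucc))) := by
      funext i
      refine Fin.cases ?_ ?_ i
      · rw [Fin.cons_zero, fin_rev_zero_eq_last]
      · intro j
        rw [Fin.cons_succ, fin_rev_succ_eq_castSucc]
    convert h1 using 1
    show (-1:ℂ)^(k+1) * F (k+1) g⁻¹ (fun i => adOP g (γ (Fin.rev i))) = _
    rw [hT]
    ring
    rfl
  · refine Continuous.mul continuous_const ?_
    exact (hF.cont' k).comp ((continuous_fst.inv).prodMk (continuous_pi fun i =>
      continuous_adOP.comp (continuous_fst.prodMk
        ((continuous_apply (Fin.rev i)).comp continuous_snd))))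

theorem isCInf_check {φ : G → ℂ} (h : IsCInf φ) : IsCInf (fun x : G => φ x⁻¹) := by
  obtain ⟨F, hF⟩ := h
  exact ⟨_, hF.check⟩

theorem itD_check {φ : G → ℂ} (h : IsCInf φ) :
    itD (fun x : G => φ x⁻¹)
      = fun k x γ => (-1:ℂ)^k * itD φ k x⁻¹ (fun i => adOP x (γ (Fin.rev i))) :=
  itD_spec ((itD_smoothSeq h).check)

end CheckAux

/-- The map `φ ↦ φ̌`, `φ̌(x) = φ(x⁻¹)`, is an isomorphism of locally convex spaces
of `E(G) = C^∞(G)` onto itself. -/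
theorem check_map_isomorphism
    (G : Type*) [Group G] [TopologicalSpace G] [IsTopologicalGroup G] :
    letI : TopologicalSpace (EC G) := smoothTop ℂ G ℂ
    ∃ e : EC G ≃L[ℂ] EC G,
      ∀ (f : EC G) (x : G), ((e f : EC G) : G → ℂ) x = (f : G → ℂ) x⁻¹ := by
  letI : TopologicalSpace (EC G) := smoothTop ℂ G ℂ
  have hsm : ∀ f : EC G, IsCInf fun y : G => (f : G → ℂ) y⁻¹ := fun f => isCInf_check f.2
  have hcoe : ∀ f : EC G, ((checkE f : EC G) : G → ℂ) = fun y => (f : G → ℂ) y⁻¹ := by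
    intro f
    rw [checkE, dif_pos (hsm f)]
  have hadd : ∀ f g : EC G, checkE (f + g) = checkE f + checkE g := by
    intro f g
    apply Subtype.ext
    funext y
    simp [hcoe, Submodule.coe_add, Pi.add_apply]
  have hsmul : ∀ (c : ℂ) (f : EC G), checkE (c • f) = c • checkE f := by
    intro c f
    apply Subtype.ext
    funext y
    simp [hcoe, Submodule.coe_smul, Pi.smul_apply]
  have hinv : ∀ f : EC G, checkE (checkE f) = f := by
    intro f
    apply Subtype.ext
    funext y
    simp [hcoe]
  -- continuity of checkE
  have hcont : Continuous (checkE : EC G → EC G) := by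
    set Φ := fun f : EC G => fun k : ℕ =>
        UniformOnFun.ofFun {S : Set (G × (Fin k → ↥(OneParam G))) | IsCompact S}
          (fun p => itD (f : G → ℂ) k p.1 p.2) with hΦdef
    have hind : IsInducing Φ := ⟨rfl⟩
    rw [hind.continuous_iff]
    haveI : UniformContinuousConstSMul ℂ ℂ :=
      uniformContinuousConstSMul_of_continuousConstSMul ℂ ℂ
    have hΘc : ∀ k : ℕ, Continuous fun p : G × (Fin k → ↥(OneParam G)) =>
        ((p.1⁻¹, fun i => adOP p.1 (p.2 (Fin.rev i))) : G × (Fin k → ↥(OneParam G))) :=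
      fun k => (continuous_fst.inv).prodMk (continuous_pi fun i =>
        continuous_adOP.comp (continuous_fst.prodMk
          ((continuous_apply (Fin.rev i)).comp continuous_snd)))
    have heq : (Φ ∘ checkE) = fun f => fun k : ℕ =>
        (UniformOnFun.ofFun {S : Set (G × (Fin k → ↥(OneParam G))) | IsCompact S} ∘
          ((((-1:ℂ)^k • ·) : ℂ → ℂ) ∘ ·) ∘
          (· ∘ fun p : G × (Fin k → ↥(OneParam G)) =>
            ((p.1⁻¹, fun i => adOP p.1 (p.2 (Fin.rev i))) : G × (Fin k → ↥(OneParam G)))) ∘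
          UniformOnFun.toFun {S : Set (G × (Fin k → ↥(OneParam G))) | IsCompact S})
            (Φ f k) := by
      funext f k
      simp only [Function.comp_apply, hΦdef]
      apply congrArg (UniformOnFun.ofFun _)
      funext p
      rw [hcoe f, itD_check f.2]
      simp [smul_eq_mul]
    rw [heq]
    refine continuous_pi fun k => ?_
    have huc1 : UniformContinuous fun z : ℂ => (-1:ℂ)^k • z :=
      uniformContinuous_const_smul _
    have hmaps : Set.MapsTo
        ((fun p : G × (Fin k → ↥(OneParam G)) =>
          ((p.1⁻¹, fun i => adOP p.1 (p.2 (Fin.rev i))) : G × (Fin k → ↥(OneParam G)))) '' ·)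
        {S : Set (G × (Fin k → ↥(OneParam G))) | IsCompact S}
        {S : Set (G × (Fin k → ↥(OneParam G))) | IsCompact S} :=
      fun S hS => hS.image (hΘc k)
    exact (((UniformOnFun.postcomp_uniformContinuous huc1).comp
      (UniformOnFun.precomp_uniformContinuous hmaps)).continuous).comp
        ((continuous_apply k).comp hind.continuous)
  refine ⟨ContinuousLinearEquiv.mk
    (LinearEquiv.mk (LinearMap.mk (AddHom.mk checkE hadd) hsmul) checkE hinv hinv)
    hcont hcont, ?_⟩
  intro f x
  exact congrFun (hcoe f) x
end

section
/- Let H be a topological group, Y a locally convex space, n ≥ 2, f ∈ C^n(H,Y), and γ₁,…,γ_n ∈ L(H) such that γ_i and γ_{i+1} commute (γ_i(t)γ_{i+1}(s) = γ_{i+1}(s)γ_i(t) for all s,t). Then the iterated derivative (D^λ)^n f(x; γ_n,…,γ_{i+1},γ_i,…,γ₁) is unchanged if γ_i and γ_{i+1} are swapped: (D^λ)^n f(x; γ_n,…,γ_{i+1},γ_i,…,γ₁) = (D^λ)^n f(x; γ_n,…,γ_i,γ_{i+1},…,γ₁) for all x ∈ H. -/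
set_option linter.unusedSectionVars false

open Filter Topology Set

private lemma oneParam_zero {G : Type*} [Group G] [TopologicalSpace G] [IsTopologicalGroup G]
    (γ : ↥(OneParam G)) : γ.1 0 = 1 := by
  have h := γ.2 0 0
  rw [add_zero] at h
  exact left_eq_mul.1 h

private lemma mvt_zero {f f' : ℝ → ℝ} (hf : ∀ x, HasDerivAt f (f' x) x) {t : ℝ} (ht : t ≠ 0) :
    ∃ ξ, |ξ| ≤ |t| ∧ f t - f 0 = t * f' ξ := by
  rcases ht.lt_or_gt with h | h
  · obtain ⟨c, hc, hc2⟩ := exists_hasDerivAt_eq_slope f f' h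
      (fun y _ => (hf y).continuousAt.continuousWithinAt) (fun y _ => hf y)
    refine ⟨c, ?_, ?_⟩
    · rw [abs_of_nonpos hc.2.le, abs_of_neg h]; linarith [hc.1]
    · rw [eq_div_iff (by linarith : (0:ℝ) - t ≠ 0)] at hc2
      nlinarith [hc2]
  · obtain ⟨c, hc, hc2⟩ := exists_hasDerivAt_eq_slope f f' h
      (fun y _ => (hf y).continuousAt.continuousWithinAt) (fun y _ => hf y)
    refine ⟨c, ?_, ?_⟩
    · rw [abs_of_nonneg hc.1.le, abs_of_pos h]; linarith [hc.2]
    · rw [eq_div_iff (by linarith : t - 0 ≠ (0:ℝ))] at hc2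
      nlinarith [hc2]

private lemma lie_second_deriv_symm
    {H : Type*} [Group H] [TopologicalSpace H] [IsTopologicalGroup H]
    {Y : Type*} [AddCommGroup Y] [Module ℝ Y] [TopologicalSpace Y]
    [IsTopologicalAddGroup Y] [ContinuousSMul ℝ Y] [LocallyConvexSpace ℝ Y] [T2Space Y]
    {φ u v w w' : H → Y} {α β : ↥(OneParam H)}
    (hu : ∀ g, HasLieDeriv φ α g (u g))
    (hv : ∀ g, HasLieDeriv φ β g (v g))
    (hwd : ∀ g, HasLieDeriv u β g (w g))
    (hw'd : ∀ g, HasLieDeriv v α g (w' g))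
    (hwc : Continuous w) (hw'c : Continuous w')
    (hcomm : ∀ t s : ℝ, α.1 t * β.1 s = β.1 s * α.1 t) (x : H) :
    w x = w' x := by
  by_contra hne
  obtain ⟨ℓ, hℓ⟩ := SeparatingDual.exists_separating_of_ne (R := ℝ) hne
  apply hℓ
  set q : ℝ → ℝ → H := fun t s => x * α.1 t * β.1 s with hq
  have hq1 : ∀ t s h : ℝ, q t s * α.1 h = q (t + h) s := by
    intro t s h
    show x * α.1 t * β.1 s * α.1 h = x * α.1 (t + h) * β.1 s
    rw [mul_assoc (x * α.1 t), ← hcomm h s, ← mul_assoc, mul_assoc x, ← α.2]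
  have hq2 : ∀ t s h : ℝ, q t s * β.1 h = q t (s + h) := by
    intro t s h
    show x * α.1 t * β.1 s * β.1 h = x * α.1 t * β.1 (s + h)
    rw [mul_assoc (x * α.1 t), ← β.2]
  have hq00 : q 0 0 = x := by
    simp [hq, oneParam_zero]
  -- derivative facts (scalar level)
  have lder : ∀ (ψ d : H → Y), (∀ g, HasLieDeriv ψ α g (d g)) → ∀ s t : ℝ,
      HasDerivAt (fun τ => ℓ (ψ (q τ s))) (ℓ (d (q t s))) t := by
    intro ψ d hder s t
    rw [hasDerivAt_iff_tendsto_slope_zero]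
    have h1 := (ℓ.continuous.tendsto _).comp (hder (q t s))
    refine h1.congr fun h => ?_
    simp only [Function.comp_apply, hq1, map_smul, map_sub, smul_eq_mul]
  have lderβ : ∀ (ψ d : H → Y), (∀ g, HasLieDeriv ψ β g (d g)) → ∀ t s : ℝ,
      HasDerivAt (fun σ => ℓ (ψ (q t σ))) (ℓ (d (q t s))) s := by
    intro ψ d hder t s
    rw [hasDerivAt_iff_tendsto_slope_zero]
    have h1 := (ℓ.continuous.tendsto _).comp (hder (q t s))
    refine h1.congr fun h => ?_
    simp only [Function.comp_apply, hq2, map_smul, map_sub, smul_eq_mul]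
  have key : ∀ t s : ℝ, t ≠ 0 → s ≠ 0 → ∃ ξ η ξ' η' : ℝ,
      |ξ| ≤ |t| ∧ |η| ≤ |s| ∧ |ξ'| ≤ |t| ∧ |η'| ≤ |s| ∧
      ℓ (w (q ξ η)) = ℓ (w' (q ξ' η')) := by
    intro t s ht hs
    obtain ⟨ξ, hξ, e1⟩ := mvt_zero (f := fun τ => ℓ (φ (q τ s)) - ℓ (φ (q τ 0)))
      (f' := fun τ => ℓ (u (q τ s)) - ℓ (u (q τ 0)))
      (fun τ => ((lder φ u hu s τ).sub (lder φ u hu 0 τ))) ht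
    obtain ⟨η, hη, e2⟩ := mvt_zero (f := fun σ => ℓ (u (q ξ σ)))
      (f' := fun σ => ℓ (w (q ξ σ))) (fun σ => lderβ u w hwd ξ σ) hs
    obtain ⟨η', hη', e3⟩ := mvt_zero (f := fun σ => ℓ (φ (q t σ)) - ℓ (φ (q 0 σ)))
      (f' := fun σ => ℓ (v (q t σ)) - ℓ (v (q 0 σ)))
      (fun σ => ((lderβ φ v hv t σ).sub (lderβ φ v hv 0 σ))) hs
    obtain ⟨ξ', hξ', e4⟩ := mvt_zero (f := fun τ => ℓ (v (q τ η')))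
      (f' := fun τ => ℓ (w' (q τ η'))) (fun τ => lder v w' hw'd η' τ) ht
    refine ⟨ξ, η, ξ', η', hξ, hη, hξ', hη', ?_⟩
    rw [e2] at e1
    rw [e4] at e3
    have h5 : t * (s * ℓ (w (q ξ η))) = s * (t * ℓ (w' (q ξ' η'))) := by linarith
    have h6 : t * (s * ℓ (w (q ξ η))) = t * (s * ℓ (w' (q ξ' η'))) := by
      rw [h5]; ring
    exact mul_left_cancel₀ hs (mul_left_cancel₀ ht h6)
  -- continuity of the second derivatives along q
  have hqc : Continuous fun p : ℝ × ℝ => q p.1 p.2 :=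
    (continuous_const.mul (α.1.continuous.comp continuous_fst)).mul
      (β.1.continuous.comp continuous_snd)
  have Wc : Continuous fun p : ℝ × ℝ => ℓ (w (q p.1 p.2)) :=
    ℓ.continuous.comp (hwc.comp hqc)
  have W'c : Continuous fun p : ℝ × ℝ => ℓ (w' (q p.1 p.2)) :=
    ℓ.continuous.comp (hw'c.comp hqc)
  have main : ∀ ε : ℝ, 0 < ε → |ℓ (w x) - ℓ (w' x)| < 2 * ε := by
    intro ε hε
    obtain ⟨δ₁, hδ₁, H₁⟩ := Metric.continuousAt_iff.1 (Wc.continuousAt (x := ((0:ℝ), (0:ℝ)))) ε hε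
    obtain ⟨δ₂, hδ₂, H₂⟩ := Metric.continuousAt_iff.1 (W'c.continuousAt (x := ((0:ℝ), (0:ℝ)))) ε hε
    set t : ℝ := min δ₁ δ₂ / 2 with htd
    have ht0 : 0 < t := by positivity
    obtain ⟨ξ, η, ξ', η', hξ, hη, hξ', hη', heq⟩ := key t t ht0.ne' ht0.ne'
    have htlt : t < min δ₁ δ₂ := by
      rw [htd]; linarith [lt_min hδ₁ hδ₂]
    have hd1 : dist ((ξ, η) : ℝ × ℝ) ((0:ℝ), (0:ℝ)) < δ₁ := by
      rw [Prod.dist_eq]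
      simp only [Real.dist_eq, sub_zero]
      exact max_lt (lt_of_le_of_lt hξ (lt_of_lt_of_le (by rwa [abs_of_pos ht0]) (min_le_left _ _)))
        (lt_of_le_of_lt hη (lt_of_lt_of_le (by rwa [abs_of_pos ht0]) (min_le_left _ _)))
    have hd2 : dist ((ξ', η') : ℝ × ℝ) ((0:ℝ), (0:ℝ)) < δ₂ := by
      rw [Prod.dist_eq]
      simp only [Real.dist_eq, sub_zero]
      exact max_lt (lt_of_le_of_lt hξ' (lt_of_lt_of_le (by rwa [abs_of_pos ht0]) (min_le_right _ _)))
        (lt_of_le_of_lt hη' (lt_of_lt_of_le (by rwa [abs_of_pos ht0]) (min_le_right _ _)))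
    have c1 := H₁ hd1
    have c2 := H₂ hd2
    simp only [hq00, Real.dist_eq] at c1 c2
    calc |ℓ (w x) - ℓ (w' x)|
        = |(ℓ (w x) - ℓ (w (q ξ η))) + (ℓ (w' (q ξ' η')) - ℓ (w' x))| := by rw [heq]; ring_nf
      _ ≤ |ℓ (w x) - ℓ (w (q ξ η))| + |ℓ (w' (q ξ' η')) - ℓ (w' x)| := abs_add_le _ _
      _ < ε + ε := by
          rw [abs_sub_comm] at c1
          rw [abs_sub_comm] at c2
          exact add_lt_add c1 (by rwa [abs_sub_comm])
      _ = 2 * ε := by ring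
  by_contra hne2
  have hpos : 0 < |ℓ (w x) - ℓ (w' x)| := abs_pos.2 (sub_ne_zero.2 hne2)
  have := main (|ℓ (w x) - ℓ (w' x)| / 4) (by positivity)
  linarith

/-- The iterated derivative of a `C^n` function is unchanged under swapping two
adjacent directions which commute. -/
theorem iterated_deriv_swap_commuting
    {H : Type*} [Group H] [TopologicalSpace H] [IsTopologicalGroup H]
    {Y : Type*} [AddCommGroup Y] [Module ℝ Y] [TopologicalSpace Y]
    [IsTopologicalAddGroup Y] [ContinuousSMul ℝ Y] [LocallyConvexSpace ℝ Y]
    [T2Space Y]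
    (n : ℕ) (hn : 2 ≤ n) (f : H → Y)
    (F : ∀ k : ℕ, H → (Fin k → ↥(OneParam H)) → Y) (hF : CnSeq n f F)
    (γ : Fin n → ↥(OneParam H)) (i j : Fin n) (hij : (i : ℕ) + 1 = (j : ℕ))
    (hcomm : ∀ t s : ℝ, (γ i).1 t * (γ j).1 s = (γ j).1 s * (γ i).1 t) (x : H) :
    F n x γ = F n x (γ ∘ ⇑(Equiv.swap i j)) := by
  classical
  have hi' : (i : ℕ) < n := i.2
  have hj' : (j : ℕ) < n := j.2
  have hk2n : (i : ℕ) + 2 ≤ n := by omega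
  have claim : ∀ m, (i : ℕ) + 2 ≤ m → ∀ (hmn : m ≤ n) (x : H),
      F m x (fun a => γ (Fin.castLE hmn a)) =
      F m x (fun a => γ (Equiv.swap i j (Fin.castLE hmn a))) := by
    intro m hm
    induction m, hm using Nat.le_induction with
    | base =>
      intro hmn x
      set k : ℕ := (i : ℕ) with hkdef
      have hkn : k < n := by omega
      have hk1n : k + 1 ≤ n := by omega
      have ilast : Fin.castLE hmn (Fin.last (k+1)) = j := by
        apply Fin.ext; simpa using hij
      have ilast0 : (Fin.castLE hk1n (Fin.last k) : Fin n) = i := by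
        apply Fin.ext; simp [hkdef]
      -- the four one-sided derivative families
      have hu : ∀ g, HasLieDeriv
          (fun h => F k h (fun a : Fin k => γ (Fin.castLE (by omega : k ≤ n) a))) (γ i) g
          (F (k+1) g (fun a : Fin (k+1) => γ (Fin.castLE hk1n a))) := by
        intro g
        have h1 := hF.2.1 k hkn g (fun a : Fin (k+1) => γ (Fin.castLE hk1n a))
        rw [ilast0] at h1
        exact h1
      have hv : ∀ g, HasLieDeriv
          (fun h => F k h (fun a : Fin k => γ (Fin.castLE (by omega : k ≤ n) a))) (γ j) g
          (F (k+1) g (fun a : Fin (k+1) => γ (Equiv.swap i j (Fin.castLE hk1n a)))) := by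
        intro g
        have h1 := hF.2.1 k hkn g (fun a : Fin (k+1) => γ (Equiv.swap i j (Fin.castLE hk1n a)))
        have e1 : (fun a : Fin k => γ (Equiv.swap i j (Fin.castLE hk1n a.castSucc)))
            = fun a : Fin k => γ (Fin.castLE (by omega : k ≤ n) a) := by
          funext a
          congr 1
          rw [Equiv.swap_apply_of_ne_of_ne]
          · exact Fin.ext rfl
          · exact Fin.ne_of_val_ne (by simpa [hkdef] using a.2.ne)
          · exact Fin.ne_of_val_ne (by simp; omega)
        have e2 : γ (Equiv.swap i j (Fin.castLE hk1n (Fin.last k))) = γ j := by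
          rw [ilast0, Equiv.swap_apply_left]
        rw [e1, e2] at h1
        exact h1
      have hwd : ∀ g, HasLieDeriv
          (fun h => F (k+1) h (fun a : Fin (k+1) => γ (Fin.castLE hk1n a))) (γ j) g
          (F (k+2) g (fun a : Fin (k+2) => γ (Fin.castLE hmn a))) := by
        intro g
        have h1 := hF.2.1 (k+1) (by omega) g (fun a : Fin (k+2) => γ (Fin.castLE hmn a))
        rw [ilast] at h1
        exact h1
      have hw'd : ∀ g, HasLieDeriv
          (fun h => F (k+1) h (fun a : Fin (k+1) => γ (Equiv.swap i j (Fin.castLE hk1n a))))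
          (γ i) g
          (F (k+2) g (fun a : Fin (k+2) => γ (Equiv.swap i j (Fin.castLE hmn a)))) := by
        intro g
        have h1 := hF.2.1 (k+1) (by omega) g
          (fun a : Fin (k+2) => γ (Equiv.swap i j (Fin.castLE hmn a)))
        have e1 : (fun a : Fin (k+1) => γ (Equiv.swap i j (Fin.castLE hmn a.castSucc)))
            = fun a : Fin (k+1) => γ (Equiv.swap i j (Fin.castLE hk1n a)) := rfl
        have e2 : γ (Equiv.swap i j (Fin.castLE hmn (Fin.last (k+1)))) = γ i := by
          rw [ilast, Equiv.swap_apply_right]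
        rw [e1, e2] at h1
        exact h1
      have hwc : Continuous fun g =>
          F (k+2) g (fun a : Fin (k+2) => γ (Fin.castLE hmn a)) :=
        (hF.2.2 (k+2) hmn).comp (continuous_id.prodMk continuous_const)
      have hw'c : Continuous fun g =>
          F (k+2) g (fun a : Fin (k+2) => γ (Equiv.swap i j (Fin.castLE hmn a))) :=
        (hF.2.2 (k+2) hmn).comp (continuous_id.prodMk continuous_const)
      exact lie_second_deriv_symm hu hv hwd hw'd hwc hw'c hcomm x
    | succ m hm IH =>
      intro hmn x
      have hmn' : m ≤ n := by omega
      have h1 := hF.2.1 m (by omega) x (fun a : Fin (m+1) => γ (Fin.castLE hmn a))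
      have h2 := hF.2.1 m (by omega) x
        (fun a : Fin (m+1) => γ (Equiv.swap i j (Fin.castLE hmn a)))
      have e1 : (fun h => F m h (fun a : Fin m => γ (Fin.castLE hmn a.castSucc)))
          = fun h => F m h (fun a : Fin m => γ (Fin.castLE hmn' a)) := by
        funext h
        congr 1
      have e2 : (fun h => F m h (fun a : Fin m => γ (Equiv.swap i j (Fin.castLE hmn a.castSucc))))
          = fun h => F m h (fun a : Fin m => γ (Fin.castLE hmn' a)) := by
        funext h
        rw [show (fun a : Fin m => γ (Equiv.swap i j (Fin.castLE hmn a.castSucc)))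
            = fun a : Fin m => γ (Equiv.swap i j (Fin.castLE hmn' a)) from rfl]
        exact (IH hmn' h).symm
      have e3 : γ (Equiv.swap i j (Fin.castLE hmn (Fin.last m))) =
          γ (Fin.castLE hmn (Fin.last m)) := by
        congr 1
        apply Equiv.swap_apply_of_ne_of_ne
        · exact Fin.ne_of_val_ne (by simp; omega)
        · exact Fin.ne_of_val_ne (by simp; omega)
      rw [e1] at h1
      rw [e2, e3] at h2
      exact tendsto_nhds_unique h1 h2
  have := claim n hk2n le_rfl x
  have eL : (fun a : Fin n => γ (Fin.castLE le_rfl a)) = γ :=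
    funext fun a => congrArg γ (Fin.ext rfl)
  have eR : (fun a : Fin n => γ (Equiv.swap i j (Fin.castLE le_rfl a)))
      = γ ∘ ⇑(Equiv.swap i j) :=
    funext fun a => congrArg (γ ∘ ⇑(Equiv.swap i j)) (Fin.ext rfl)
  rwa [eL, eR] at this
end

section
/- Let G, H be topological groups and Y a locally convex space. For φ ∈ C^∞(H × G, Y), the map φ̃ : H → E(G,Y) defined by φ̃(x)(g) = φ(x,g) is continuous, where E(G,Y) carries the topology of the seminorms p_{K₁,K₂}(f) = sup{|(D^λ_γ f)(g)| : γ ∈ K₁, g ∈ K₂} over compact K₁ ⊆ L(G)^k and K₂ ⊆ G. -/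
set_option linter.unusedSectionVars false

open Filter Topology Set

/-- If `φ ∈ C^∞(H × G, Y)`, then `φ̃ : H → E(G, Y)`, `φ̃(x)(g) = φ(x, g)`, is continuous
for the seminorm topology on `E(G, Y)`. -/
theorem tilde_map_continuous
    {H : Type*} [Group H] [TopologicalSpace H] [IsTopologicalGroup H]
    {G : Type*} [Group G] [TopologicalSpace G] [IsTopologicalGroup G]
    {Y : Type*} [AddCommGroup Y] [Module ℝ Y] [UniformSpace Y]
    [IsUniformAddGroup Y] [ContinuousSMul ℝ Y] [LocallyConvexSpace ℝ Y] [T2Space Y]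
    (φ : H × G → Y) (hφ : IsCInf φ) :
    ∃ h : ∀ x : H, IsCInf fun g => φ (x, g),
      Continuous[inferInstance, smoothTop ℝ G Y]
        fun x : H => (⟨fun g => φ (x, g), h x⟩ : ↥(SmoothCarrier ℝ G Y)) := by
  obtain ⟨F, hF⟩ := hφ
  have hcont_iota : Continuous fun γ : ↥(OneParam G) => prodOP (oneOP : ↥(OneParam H)) γ := by
    apply Continuous.subtype_mk
    exact (ContinuousMap.continuous_postcomp
      (⟨fun a => ((1 : H), a), by fun_prop⟩ : C(G, H × G))).comp continuous_subtype_val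
  have hsm : ∀ x : H, SmoothSeq (fun g => φ (x, g))
      (fun k g γ => F k (x, g) fun i => prodOP (oneOP : ↥(OneParam H)) (γ i)) := by
    intro x n
    refine ⟨fun g γ => (hF n).1 (x, g) _, fun k hk g γ => ?_, fun k hk => ?_⟩
    · have h := (hF n).2.1 k hk (x, g)
        (fun i => prodOP (oneOP : ↥(OneParam H)) (γ i))
      refine h.congr fun t => ?_
      have : ((x, g) * (prodOP (oneOP : ↥(OneParam H)) (γ (Fin.last k))).1 t)
          = (x, g * (γ (Fin.last k)).1 t) := by
        simp [prodOP, oneOP, Prod.ext_iff]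
      rw [this]
    · exact ((hF n).2.2 k hk).comp
        (((continuous_const.prodMk continuous_fst)).prodMk
          (continuous_pi fun i => hcont_iota.comp ((continuous_apply i).comp continuous_snd)))
  refine ⟨fun x => ⟨_, hsm x⟩, ?_⟩
  letI τ : TopologicalSpace ↥(SmoothCarrier ℝ G Y) := smoothTop ℝ G Y
  set Φ := fun f : ↥(SmoothCarrier ℝ G Y) => fun k : ℕ =>
      UniformOnFun.ofFun {S : Set (G × (Fin k → ↥(OneParam G))) | IsCompact S}
        (fun p => itD (f : G → Y) k p.1 p.2) with hΦdef
  have hind : IsInducing Φ := ⟨rfl⟩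
  rw [hind.continuous_iff]
  refine continuous_pi fun k => ?_
  have hitD : ∀ x : H, itD (fun g => φ (x, g))
      = fun k g γ => F k (x, g) fun i => prodOP (oneOP : ↥(OneParam H)) (γ i) :=
    fun x => itD_spec (hsm x)
  have hcontk : Continuous fun q : H × (G × (Fin k → ↥(OneParam G))) =>
      F k (q.1, q.2.1) fun i => prodOP (oneOP : ↥(OneParam H)) (q.2.2 i) :=
    ((hF k).2.2 k le_rfl).comp
      ((continuous_fst.prodMk (continuous_fst.comp continuous_snd)).prodMk
        (continuous_pi fun i => hcont_iota.comp
          ((continuous_apply i).comp (continuous_snd.comp continuous_snd))))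
  have hcurry : Continuous fun x : H =>
      (ContinuousMap.curry ⟨_, hcontk⟩ x : C(G × (Fin k → ↥(OneParam G)), Y)) :=
    (ContinuousMap.curry ⟨_, hcontk⟩).continuous
  have hkey : (fun x : H => Φ (⟨fun g => φ (x, g), ⟨_, hsm x⟩⟩ : ↥(SmoothCarrier ℝ G Y)) k)
      = fun x : H => ContinuousMap.toUniformOnFunIsCompact (ContinuousMap.curry ⟨_, hcontk⟩ x) := by
    funext x
    simp only [hΦdef]
    show UniformOnFun.ofFun _ (fun p : G × (Fin k → ↥(OneParam G)) =>
      itD (fun g => φ (x, g)) k p.1 p.2) = _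
    rw [hitD x]
    rfl
  show Continuous fun x : H => Φ _ k
  rw [hkey]
  exact ContinuousMap.isUniformEmbedding_toUniformOnFunIsCompact.toIsUniformInducing.uniformContinuous.continuous.comp hcurry
end
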